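/- Let Q₁,…,Q₂₈ ∈ ℂ[x₁,…,x₁₄] be the 28 quadrics listed in the context. For a point (x₁,…,x₁₄) ∈ ℂ¹⁴ with x_i = 0 for all i ∉ {6, 12, 13, 14}, all 28 quadrics vanish at the point if and only if x₁₃ = 0 and x₁₄² + x₆x₁₂ = 0. (Hence the intersection of the weighted G₂ flag variety with the 1/4 singular stratum of ℙ¹³[1²,2,3²,4⁴,5²,6,7²] — the coordinates x₆, x₁₂, x₁₃, x₁₄ being exactly those of weight 4 — is the rational curve C = {x₆x₁₂ + x₁₄² = 0} in ℙ²[x₆, x₁₂, x₁₄], which on the Calabi–Yau threefold section X is a curve of singularities of type 1/4(1,3).) -/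
import Mathlib


/-- The quadric `Q1`, evaluated at a point of `ℂ¹⁴`. -/
noncomputable def cG2Q1 (x : Fin 14 → ℂ) : ℂ :=
  (1 : ℂ) * x 13 * x 13 + (1 : ℂ) * x 12 * x 13 + (1/3 : ℂ) * x 12 * x 12 + (1 : ℂ) * x 5 * x 11 + (1/3 : ℂ) * x 3 * x 9 + (1 : ℂ) * x 4 * x 10 + (1/3 : ℂ) * x 2 * x 8 + (1 : ℂ) * x 1 * x 7 + (1/3 : ℂ) * x 0 * x 6

/-- The quadric `Q2`, evaluated at a point of `ℂ¹⁴`. -/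
noncomputable def cG2Q2 (x : Fin 14 → ℂ) : ℂ :=
  (1 : ℂ) * x 13 * x 13 + (2 : ℂ) * x 12 * x 13 + (8/9 : ℂ) * x 12 * x 12 + (1 : ℂ) * x 5 * x 11 + (3 : ℂ) * x 4 * x 10 + (-4/9 : ℂ) * x 3 * x 9 + (-7/9 : ℂ) * x 2 * x 8 + (-5/9 : ℂ) * x 0 * x 6

/-- The quadric `Q3`, evaluated at a point of `ℂ¹⁴`. -/
noncomputable def cG2Q3 (x : Fin 14 → ℂ) : ℂ :=
  (2 : ℂ) * x 12 * x 13 + (5/3 : ℂ) * x 12 * x 12 + (9 : ℂ) * x 4 * x 10 + (-5/3 : ℂ) * x 3 * x 9 + (-7/3 : ℂ) * x 2 * x 8 + (3 : ℂ) * x 1 * x 7 + (-4/3 : ℂ) * x 0 * x 6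

/-- The quadric `Q4`, evaluated at a point of `ℂ¹⁴`. -/
noncomputable def cG2Q4 (x : Fin 14 → ℂ) : ℂ :=
  (1 : ℂ) * x 12 * x 12 + (9 : ℂ) * x 4 * x 10 + (-3 : ℂ) * x 3 * x 9 + (-3 : ℂ) * x 2 * x 8 + (9 : ℂ) * x 1 * x 7 + (-2 : ℂ) * x 0 * x 6

/-- The quadric `Q5`, evaluated at a point of `ℂ¹⁴`. -/
noncomputable def cG2Q5 (x : Fin 14 → ℂ) : ℂ :=
  (1 : ℂ) * x 10 * x 13 + (1/3 : ℂ) * x 10 * x 12 + (1/9 : ℂ) * x 6 * x 9 + (1 : ℂ) * x 1 * x 11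

/-- The quadric `Q6`, evaluated at a point of `ℂ¹⁴`. -/
noncomputable def cG2Q6 (x : Fin 14 → ℂ) : ℂ :=
  (1 : ℂ) * x 4 * x 9 + (-2/3 : ℂ) * x 3 * x 8 + (-3 : ℂ) * x 2 * x 7 + (2 : ℂ) * x 0 * x 13 + (1/3 : ℂ) * x 0 * x 12

/-- The quadric `Q7`, evaluated at a point of `ℂ¹⁴`. -/
noncomputable def cG2Q7 (x : Fin 14 → ℂ) : ℂ :=
  (1 : ℂ) * x 9 * x 13 + (4/9 : ℂ) * x 9 * x 12 + (2/9 : ℂ) * x 6 * x 8 + (-1 : ℂ) * x 2 * x 11 + (1/3 : ℂ) * x 0 * x 10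

/-- The quadric `Q8`, evaluated at a point of `ℂ¹⁴`. -/
noncomputable def cG2Q8 (x : Fin 14 → ℂ) : ℂ :=
  (1 : ℂ) * x 8 * x 13 + (1 : ℂ) * x 8 * x 12 + (-1 : ℂ) * x 6 * x 7 + (1 : ℂ) * x 3 * x 11 + (2/3 : ℂ) * x 0 * x 9

/-- The quadric `Q9`, evaluated at a point of `ℂ¹⁴`. -/
noncomputable def cG2Q9 (x : Fin 14 → ℂ) : ℂ :=
  (1 : ℂ) * x 7 * x 13 + (2/3 : ℂ) * x 7 * x 12 + (-1 : ℂ) * x 4 * x 11 + (1/9 : ℂ) * x 0 * x 8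

/-- The quadric `Q10`, evaluated at a point of `ℂ¹⁴`. -/
noncomputable def cG2Q10 (x : Fin 14 → ℂ) : ℂ :=
  (2 : ℂ) * x 6 * x 13 + (5/3 : ℂ) * x 6 * x 12 + (-3 : ℂ) * x 3 * x 10 + (-2/3 : ℂ) * x 2 * x 9 + (1 : ℂ) * x 1 * x 8

/-- The quadric `Q11`, evaluated at a point of `ℂ¹⁴`. -/
noncomputable def cG2Q11 (x : Fin 14 → ℂ) : ℂ :=
  (1 : ℂ) * x 5 * x 7 + (1 : ℂ) * x 4 * x 13 + (1/3 : ℂ) * x 4 * x 12 + (1/9 : ℂ) * x 0 * x 3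

/-- The quadric `Q12`, evaluated at a point of `ℂ¹⁴`. -/
noncomputable def cG2Q12 (x : Fin 14 → ℂ) : ℂ :=
  (3 : ℂ) * x 4 * x 6 + (-1 : ℂ) * x 5 * x 8 + (1 : ℂ) * x 3 * x 13 + (4/3 : ℂ) * x 3 * x 12 + (-2/3 : ℂ) * x 0 * x 2

/-- The quadric `Q13`, evaluated at a point of `ℂ¹⁴`. -/
noncomputable def cG2Q13 (x : Fin 14 → ℂ) : ℂ :=
  (1 : ℂ) * x 5 * x 9 + (-2/3 : ℂ) * x 3 * x 6 + (1 : ℂ) * x 2 * x 13 + (-1/3 : ℂ) * x 2 * x 12 + (3 : ℂ) * x 0 * x 1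

/-- The quadric `Q14`, evaluated at a point of `ℂ¹⁴`. -/
noncomputable def cG2Q14 (x : Fin 14 → ℂ) : ℂ :=
  (-1 : ℂ) * x 5 * x 10 + (1/9 : ℂ) * x 2 * x 6 + (1 : ℂ) * x 1 * x 13 + (2/3 : ℂ) * x 1 * x 12

/-- The quadric `Q15`, evaluated at a point of `ℂ¹⁴`. -/
noncomputable def cG2Q15 (x : Fin 14 → ℂ) : ℂ :=
  (1 : ℂ) * x 11 * x 12 + (-1/3 : ℂ) * x 8 * x 9 + (3 : ℂ) * x 7 * x 10

/-- The quadric `Q16`, evaluated at a point of `ℂ¹⁴`. -/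
noncomputable def cG2Q16 (x : Fin 14 → ℂ) : ℂ :=
  (1 : ℂ) * x 9 * x 12 + (-1 : ℂ) * x 6 * x 8 + (3 : ℂ) * x 0 * x 10

/-- The quadric `Q17`, evaluated at a point of `ℂ¹⁴`. -/
noncomputable def cG2Q17 (x : Fin 14 → ℂ) : ℂ :=
  (1 : ℂ) * x 8 * x 12 + (-3 : ℂ) * x 6 * x 7 + (1 : ℂ) * x 0 * x 9

/-- The quadric `Q18`, evaluated at a point of `ℂ¹⁴`. -/
noncomputable def cG2Q18 (x : Fin 14 → ℂ) : ℂ :=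
  (1 : ℂ) * x 6 * x 12 + (-3 : ℂ) * x 3 * x 10 + (3 : ℂ) * x 1 * x 8

/-- The quadric `Q19`, evaluated at a point of `ℂ¹⁴`. -/
noncomputable def cG2Q19 (x : Fin 14 → ℂ) : ℂ :=
  (1 : ℂ) * x 5 * x 12 + (-1/3 : ℂ) * x 2 * x 3 + (3 : ℂ) * x 1 * x 4

/-- The quadric `Q20`, evaluated at a point of `ℂ¹⁴`. -/
noncomputable def cG2Q20 (x : Fin 14 → ℂ) : ℂ :=
  (3 : ℂ) * x 4 * x 6 + (1 : ℂ) * x 3 * x 12 + (-1 : ℂ) * x 0 * x 2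

/-- The quadric `Q21`, evaluated at a point of `ℂ¹⁴`. -/
noncomputable def cG2Q21 (x : Fin 14 → ℂ) : ℂ :=
  (1 : ℂ) * x 3 * x 6 + (1 : ℂ) * x 2 * x 12 + (-3 : ℂ) * x 0 * x 1

/-- The quadric `Q22`, evaluated at a point of `ℂ¹⁴`. -/
noncomputable def cG2Q22 (x : Fin 14 → ℂ) : ℂ :=
  (1 : ℂ) * x 0 * x 12 + (-3 : ℂ) * x 4 * x 9 + (3 : ℂ) * x 2 * x 7

/-- The quadric `Q23`, evaluated at a point of `ℂ¹⁴`. -/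
noncomputable def cG2Q23 (x : Fin 14 → ℂ) : ℂ :=
  (1 : ℂ) * x 8 * x 10 + (-1/3 : ℂ) * x 9 * x 9 + (1 : ℂ) * x 6 * x 11

/-- The quadric `Q24`, evaluated at a point of `ℂ¹⁴`. -/
noncomputable def cG2Q24 (x : Fin 14 → ℂ) : ℂ :=
  (1/3 : ℂ) * x 8 * x 8 + (-1 : ℂ) * x 7 * x 9 + (1 : ℂ) * x 0 * x 11

/-- The quadric `Q25`, evaluated at a point of `ℂ¹⁴`. -/
noncomputable def cG2Q25 (x : Fin 14 → ℂ) : ℂ :=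
  (1/3 : ℂ) * x 6 * x 6 + (1 : ℂ) * x 2 * x 10 + (1 : ℂ) * x 1 * x 9

/-- The quadric `Q26`, evaluated at a point of `ℂ¹⁴`. -/
noncomputable def cG2Q26 (x : Fin 14 → ℂ) : ℂ :=
  (1 : ℂ) * x 4 * x 8 + (1 : ℂ) * x 3 * x 7 + (1/3 : ℂ) * x 0 * x 0

/-- The quadric `Q27`, evaluated at a point of `ℂ¹⁴`. -/
noncomputable def cG2Q27 (x : Fin 14 → ℂ) : ℂ :=
  (1 : ℂ) * x 5 * x 6 + (1/3 : ℂ) * x 2 * x 2 + (-1 : ℂ) * x 1 * x 3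

/-- The quadric `Q28`, evaluated at a point of `ℂ¹⁴`. -/
noncomputable def cG2Q28 (x : Fin 14 → ℂ) : ℂ :=
  (1 : ℂ) * x 0 * x 5 + (-1/3 : ℂ) * x 3 * x 3 + (1 : ℂ) * x 2 * x 4

/-- The 28 quadrics `Q₁, …, Q₂₈` defining the codimension-eight `G₂` flag variety
`Σ ⊂ ℙ¹³`, as functions on `ℂ¹⁴` (a point is `x : Fin 14 → ℂ`, with
`xᵢ = x (i−1)`). -/
noncomputable def cG2Quadrics : Fin 28 → (Fin 14 → ℂ) → ℂ :=
  ![cG2Q1, cG2Q2, cG2Q3, cG2Q4, cG2Q5, cG2Q6, cG2Q7, cG2Q8, cG2Q9, cG2Q10, cG2Q11, cG2Q12, cG2Q13, cG2Q14, cG2Q15, cG2Q16, cG2Q17, cG2Q18, cG2Q19, cG2Q20, cG2Q21, cG2Q22, cG2Q23, cG2Q24, cG2Q25, cG2Q26, cG2Q27, cG2Q28]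

/-- **The `1/4` singular stratum meets `wΣ` in the conic `{x₆x₁₂ + x₁₄² = 0}`.**
For a point of `ℂ¹⁴` with `xᵢ = 0` for all `i ∉ {6, 12, 13, 14}`, all 28 quadrics
vanish at the point if and only if `x₁₃ = 0` and `x₁₄² + x₆x₁₂ = 0`.  (Hence the
intersection of the weighted `G₂` flag variety with the `1/4` singular stratum of
`ℙ¹³[1²,2,3²,4⁴,5²,6,7²]` — the coordinates `x₆,x₁₂,x₁₃,x₁₄` being exactly those of
weight 4 — is the rational curve `C = {x₆x₁₂ + x₁₄² = 0} ⊂ ℙ²[x₆,x₁₂,x₁₄]`, which on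
the Calabi–Yau threefold section `X` is a curve of singularities of type
`1/4(1,3)`.) -/
theorem G2_one_fourth_stratum (x : Fin 14 → ℂ)
    (hzero : ∀ i : Fin 14, i ≠ 5 → i ≠ 11 → i ≠ 12 → i ≠ 13 → x i = 0) :
    (∀ j : Fin 28, cG2Quadrics j x = 0) ↔
      (x 12 = 0 ∧ x 13 ^ 2 + x 5 * x 11 = 0) := by
  have h0 : x 0 = 0 := hzero 0 (by decide) (by decide) (by decide) (by decide)
  have h1 : x 1 = 0 := hzero 1 (by decide) (by decide) (by decide) (by decide)
  have h2 : x 2 = 0 := hzero 2 (by decide) (by decide) (by decide) (by decide)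
  have h3 : x 3 = 0 := hzero 3 (by decide) (by decide) (by decide) (by decide)
  have h4 : x 4 = 0 := hzero 4 (by decide) (by decide) (by decide) (by decide)
  have h6 : x 6 = 0 := hzero 6 (by decide) (by decide) (by decide) (by decide)
  have h7 : x 7 = 0 := hzero 7 (by decide) (by decide) (by decide) (by decide)
  have h8 : x 8 = 0 := hzero 8 (by decide) (by decide) (by decide) (by decide)
  have h9 : x 9 = 0 := hzero 9 (by decide) (by decide) (by decide) (by decide)
  have h10 : x 10 = 0 := hzero 10 (by decide) (by decide) (by decide) (by decide)
  constructor
  · intro h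
    have hq4 : cG2Q4 x = 0 := h 3
    have hq1 : cG2Q1 x = 0 := h 0
    unfold cG2Q4 at hq4
    unfold cG2Q1 at hq1
    have h12 : x 12 = 0 := by
      have hsq : x 12 * x 12 = 0 := by
        linear_combination hq4 - 9*x 10*h4 + 3*x 9*h3 + 3*x 8*h2 - 9*x 7*h1 + 2*x 6*h0
      exact mul_self_eq_zero.mp hsq
    refine ⟨h12, ?_⟩
    linear_combination hq1 - (x 13 + (1/3)*x 12)*h12 - (1/3)*x 9*h3 - x 10*h4 - (1/3)*x 8*h2 - x 7*h1 - (1/3)*x 6*h0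
  · rintro ⟨h12, h13⟩ j
    fin_cases j
    · show cG2Q1 x = 0
      simp only [cG2Q1, h0, h1, h2, h3, h4, h6, h7, h8, h9, h10, h12,
        mul_zero, zero_mul, add_zero, zero_add, neg_zero]
      try linear_combination h13
    · show cG2Q2 x = 0
      simp only [cG2Q2, h0, h1, h2, h3, h4, h6, h7, h8, h9, h10, h12,
        mul_zero, zero_mul, add_zero, zero_add, neg_zero]
      try linear_combination h13
    · show cG2Q3 x = 0
      simp only [cG2Q3, h0, h1, h2, h3, h4, h6, h7, h8, h9, h10, h12,
        mul_zero, zero_mul, add_zero, zero_add, neg_zero]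
      try linear_combination h13
    · show cG2Q4 x = 0
      simp only [cG2Q4, h0, h1, h2, h3, h4, h6, h7, h8, h9, h10, h12,
        mul_zero, zero_mul, add_zero, zero_add, neg_zero]
      try linear_combination h13
    · show cG2Q5 x = 0
      simp only [cG2Q5, h0, h1, h2, h3, h4, h6, h7, h8, h9, h10, h12,
        mul_zero, zero_mul, add_zero, zero_add, neg_zero]
      try linear_combination h13
    · show cG2Q6 x = 0
      simp only [cG2Q6, h0, h1, h2, h3, h4, h6, h7, h8, h9, h10, h12,
        mul_zero, zero_mul, add_zero, zero_add, neg_zero]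
      try linear_combination h13
    · show cG2Q7 x = 0
      simp only [cG2Q7, h0, h1, h2, h3, h4, h6, h7, h8, h9, h10, h12,
        mul_zero, zero_mul, add_zero, zero_add, neg_zero]
      try linear_combination h13
    · show cG2Q8 x = 0
      simp only [cG2Q8, h0, h1, h2, h3, h4, h6, h7, h8, h9, h10, h12,
        mul_zero, zero_mul, add_zero, zero_add, neg_zero]
      try linear_combination h13
    · show cG2Q9 x = 0
      simp only [cG2Q9, h0, h1, h2, h3, h4, h6, h7, h8, h9, h10, h12,
        mul_zero, zero_mul, add_zero, zero_add, neg_zero]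
      try linear_combination h13
    · show cG2Q10 x = 0
      simp only [cG2Q10, h0, h1, h2, h3, h4, h6, h7, h8, h9, h10, h12,
        mul_zero, zero_mul, add_zero, zero_add, neg_zero]
      try linear_combination h13
    · show cG2Q11 x = 0
      simp only [cG2Q11, h0, h1, h2, h3, h4, h6, h7, h8, h9, h10, h12,
        mul_zero, zero_mul, add_zero, zero_add, neg_zero]
      try linear_combination h13
    · show cG2Q12 x = 0
      simp only [cG2Q12, h0, h1, h2, h3, h4, h6, h7, h8, h9, h10, h12,
        mul_zero, zero_mul, add_zero, zero_add, neg_zero]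
      try linear_combination h13
    · show cG2Q13 x = 0
      simp only [cG2Q13, h0, h1, h2, h3, h4, h6, h7, h8, h9, h10, h12,
        mul_zero, zero_mul, add_zero, zero_add, neg_zero]
      try linear_combination h13
    · show cG2Q14 x = 0
      simp only [cG2Q14, h0, h1, h2, h3, h4, h6, h7, h8, h9, h10, h12,
        mul_zero, zero_mul, add_zero, zero_add, neg_zero]
      try linear_combination h13
    · show cG2Q15 x = 0
      simp only [cG2Q15, h0, h1, h2, h3, h4, h6, h7, h8, h9, h10, h12,
        mul_zero, zero_mul, add_zero, zero_add, neg_zero]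
      try linear_combination h13
    · show cG2Q16 x = 0
      simp only [cG2Q16, h0, h1, h2, h3, h4, h6, h7, h8, h9, h10, h12,
        mul_zero, zero_mul, add_zero, zero_add, neg_zero]
      try linear_combination h13
    · show cG2Q17 x = 0
      simp only [cG2Q17, h0, h1, h2, h3, h4, h6, h7, h8, h9, h10, h12,
        mul_zero, zero_mul, add_zero, zero_add, neg_zero]
      try linear_combination h13
    · show cG2Q18 x = 0
      simp only [cG2Q18, h0, h1, h2, h3, h4, h6, h7, h8, h9, h10, h12,
        mul_zero, zero_mul, add_zero, zero_add, neg_zero]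
      try linear_combination h13
    · show cG2Q19 x = 0
      simp only [cG2Q19, h0, h1, h2, h3, h4, h6, h7, h8, h9, h10, h12,
        mul_zero, zero_mul, add_zero, zero_add, neg_zero]
      try linear_combination h13
    · show cG2Q20 x = 0
      simp only [cG2Q20, h0, h1, h2, h3, h4, h6, h7, h8, h9, h10, h12,
        mul_zero, zero_mul, add_zero, zero_add, neg_zero]
      try linear_combination h13
    · show cG2Q21 x = 0
      simp only [cG2Q21, h0, h1, h2, h3, h4, h6, h7, h8, h9, h10, h12,
        mul_zero, zero_mul, add_zero, zero_add, neg_zero]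
      try linear_combination h13
    · show cG2Q22 x = 0
      simp only [cG2Q22, h0, h1, h2, h3, h4, h6, h7, h8, h9, h10, h12,
        mul_zero, zero_mul, add_zero, zero_add, neg_zero]
      try linear_combination h13
    · show cG2Q23 x = 0
      simp only [cG2Q23, h0, h1, h2, h3, h4, h6, h7, h8, h9, h10, h12,
        mul_zero, zero_mul, add_zero, zero_add, neg_zero]
      try linear_combination h13
    · show cG2Q24 x = 0
      simp only [cG2Q24, h0, h1, h2, h3, h4, h6, h7, h8, h9, h10, h12,
        mul_zero, zero_mul, add_zero, zero_add, neg_zero]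
      try linear_combination h13
    · show cG2Q25 x = 0
      simp only [cG2Q25, h0, h1, h2, h3, h4, h6, h7, h8, h9, h10, h12,
        mul_zero, zero_mul, add_zero, zero_add, neg_zero]
      try linear_combination h13
    · show cG2Q26 x = 0
      simp only [cG2Q26, h0, h1, h2, h3, h4, h6, h7, h8, h9, h10, h12,
        mul_zero, zero_mul, add_zero, zero_add, neg_zero]
      try linear_combination h13
    · show cG2Q27 x = 0
      simp only [cG2Q27, h0, h1, h2, h3, h4, h6, h7, h8, h9, h10, h12,
        mul_zero, zero_mul, add_zero, zero_add, neg_zero]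
      try linear_combination h13
    · show cG2Q28 x = 0
      simp only [cG2Q28, h0, h1, h2, h3, h4, h6, h7, h8, h9, h10, h12,
        mul_zero, zero_mul, add_zero, zero_add, neg_zero]
      try linear_combination h13
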